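/- Let X be a regular space, and let ℒ be a π-network of X such that each L ∈ ℒ carries a subset H_L and a pairwise disjoint family {X_{L,α} : α < ω₁} of subsets of L, each of cardinality ω₁, satisfying: for every α < ω₁ and every Y ⊆ X_{L,α} of cardinality ω₁, the set of complete accumulation points of Y in L is nonempty, and the set of complete accumulation points of X_{L,α} in L equals H_L. Let 𝒦 ⊆ ℒ be maximal with the property that for any two distinct K, L ∈ 𝒦 and any α, β < ω₁, |X_{K,α} ∩ X_{L,β}| ≤ ω. Then ⋃{H_K : K ∈ 𝒦} is dense in X. -/
import Mathlib


open Cardinal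

universe u

/-- The set of complete accumulation points of an (uncountable, size-ω₁) set `S`
computed in the subspace `L`: points of `L` each of whose neighborhoods meets `S`
in an uncountable set. -/
def CAP {X : Type u} [TopologicalSpace X] (L S : Set X) : Set X :=
  {x ∈ L | ∀ U : Set X, IsOpen U → x ∈ U → ¬ (U ∩ S).Countable}

theorem dense_union_of_maximal_ad {X : Type u} [TopologicalSpace X] [T3Space X]
    {ι : Type u} (hι : #ι = aleph 1)
    (ℒ : Set (Set X))
    (hπ : ∀ U : Set X, IsOpen U → U.Nonempty → ∃ L ∈ ℒ, L.Nonempty ∧ L ⊆ U)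
    (H : Set X → Set X) (F : Set X → ι → Set X)
    (hsub : ∀ L ∈ ℒ, ∀ α : ι, F L α ⊆ L)
    (hdisj : ∀ L ∈ ℒ, Pairwise (Function.onFun Disjoint (F L)))
    (hcard : ∀ L ∈ ℒ, ∀ α : ι, #↥(F L α) = aleph 1)
    (happ : ∀ L ∈ ℒ, ∀ α : ι, ∀ Y ⊆ F L α, #↥Y = aleph 1 → (CAP L Y).Nonempty)
    (hcap : ∀ L ∈ ℒ, ∀ α : ι, CAP L (F L α) = H L)
    (𝒦 : Set (Set X)) (h𝒦 : 𝒦 ⊆ ℒ)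
    (had : ∀ K ∈ 𝒦, ∀ L ∈ 𝒦, K ≠ L → ∀ α β : ι, (F K α ∩ F L β).Countable)
    (hmax : ∀ L ∈ ℒ, L ∉ 𝒦 → ∃ K ∈ 𝒦, ∃ α β : ι, ¬ (F K α ∩ F L β).Countable) :
    Dense (⋃ K ∈ 𝒦, H K) := by
  -- ι is nonempty since #ι = ℵ₁ ≠ 0
  have hιne : Nonempty ι := by
    rw [← Cardinal.mk_ne_zero_iff, hι]
    exact ne_of_gt (lt_of_lt_of_le Cardinal.aleph0_pos
      (le_of_lt Cardinal.aleph0_lt_aleph_one))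
  obtain ⟨α0⟩ := hιne
  rw [dense_iff_inter_open]
  intro U hU hUne
  obtain ⟨x, hxU⟩ := hUne
  -- regularity: find open V with x ∈ V and closure V ⊆ U
  obtain ⟨s, hs, hsc, hsU⟩ := exists_mem_nhds_isClosed_subset (hU.mem_nhds hxU)
  set V := interior s with hV
  have hxV : x ∈ V := mem_interior_iff_mem_nhds.2 hs
  have hVU : closure V ⊆ U :=
    (closure_minimal interior_subset hsc).trans hsU
  obtain ⟨L, hLℒ, hLne, hLV⟩ := hπ V isOpen_interior ⟨x, hxV⟩
  by_cases hL : L ∈ 𝒦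
  · -- L itself is in 𝒦; take a complete accumulation point of F L α0
    obtain ⟨y, hyL, hy⟩ := happ L hLℒ α0 (F L α0) subset_rfl (hcard L hLℒ α0)
    refine ⟨y, ?_, ?_⟩
    · exact hVU (subset_closure (hLV hyL))
    · refine Set.mem_iUnion₂.2 ⟨L, hL, ?_⟩
      rw [← hcap L hLℒ α0]
      exact ⟨hyL, hy⟩
  · -- maximality gives K ∈ 𝒦 with uncountable intersection
    obtain ⟨K, hK, α, β, hunc⟩ := hmax L hLℒ hL
    set Y := F K α ∩ F L β with hY
    have hYsub : Y ⊆ F K α := Set.inter_subset_left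
    have hKℒ : K ∈ ℒ := h𝒦 hK
    have hYcard : #↥Y = aleph 1 := by
      apply le_antisymm
      · calc #↥Y ≤ #↥(F K α) := Cardinal.mk_le_mk_of_subset hYsub
          _ = aleph 1 := hcard K hKℒ α
      · by_contra h
        exact hunc ((Cardinal.countable_iff_lt_aleph_one Y).2
          (lt_of_not_ge h))
    obtain ⟨y, hyK, hy⟩ := happ K hKℒ α Y hYsub hYcard
    have hyHK : y ∈ H K := by
      rw [← hcap K hKℒ α]
      refine ⟨hyK, fun W hW hyW hc => hy W hW hyW ?_⟩
      exact hc.mono (Set.inter_subset_inter_right W hYsub)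
    have hycl : y ∈ closure V := by
      rw [mem_closure_iff]
      intro W hW hyW
      have hne : (W ∩ Y).Nonempty := by
        rw [Set.nonempty_iff_ne_empty]
        intro h
        exact hy W hW hyW (h ▸ Set.countable_empty)
      obtain ⟨z, hzW, hzY⟩ := hne
      exact ⟨z, hzW, hLV (hsub L hLℒ β hzY.2)⟩
    exact ⟨y, hVU hycl, Set.mem_iUnion₂.2 ⟨K, hK, hyHK⟩⟩
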